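/- (Bol's identity.) Let k ≥ 2 be an integer, let f : ℍ → ℂ be holomorphic on the complex upper half-plane ℍ, and let g = (a b; c d) ∈ SL(2, ℝ). Then for all τ ∈ ℍ, the (k−1)-st derivative of the weight-(2−k) slash f|_{2−k} g equals the weight-k slash of the (k−1)-st derivative of f: d^{k−1}/dτ^{k−1} ( (f|_{2−k} g)(τ) ) = ( (d^{k−1}f/dτ^{k−1}) |_k g )(τ). -/

import Mathlib

open Complex Finset


/-- Coefficient in the generalized Bol formula. -/
noncomputable def bolA (n : ℤ) (m j : ℕ) : ℂ :=
  (m.choose j : ℂ) * ∏ i ∈ Finset.Ico j m, ((n : ℂ) - (i : ℂ))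

lemma bolA_zero (n : ℤ) {m j : ℕ} (h : m < j) : bolA n m j = 0 := by
  simp [bolA, Nat.choose_eq_zero_of_lt h]

lemma bolA_rec0 (n : ℤ) (m : ℕ) : bolA n (m+1) 0 = ((n : ℂ) - m) * bolA n m 0 := by
  simp only [bolA, Nat.choose_zero_right, Nat.cast_one, one_mul]
  rw [Finset.prod_Ico_succ_top (Nat.zero_le m)]
  ring

lemma bolA_recS (n : ℤ) (m j : ℕ) :
    bolA n (m+1) (j+1) = ((n : ℂ) - m - (j+1)) * bolA n m (j+1) + bolA n m j := by
  rcases lt_trichotomy j m with h | rfl | h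
  · have h1 : j + 1 ≤ m := h
    rw [bolA, bolA, bolA, Finset.prod_Ico_succ_top h1,
      Finset.prod_eq_prod_Ico_succ_bot h (fun i => (n : ℂ) - (i : ℂ)),
      Nat.choose_succ_succ]
    have hc : ((j : ℂ) + 1) * (m.choose (j+1) : ℂ) = ((m : ℂ) - j) * (m.choose j : ℂ) := by
      have := Nat.choose_succ_right_eq m j
      have hmj : ((m - j : ℕ) : ℂ) = (m : ℂ) - j := by
        push_cast [Nat.cast_sub h.le]; ring
      calc ((j : ℂ) + 1) * (m.choose (j+1) : ℂ)
          = ((m.choose (j+1) * (j+1) : ℕ) : ℂ) := by push_cast; ring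
        _ = ((m.choose j * (m - j) : ℕ) : ℂ) := by rw [this]
        _ = ((m : ℂ) - j) * (m.choose j : ℂ) := by push_cast [Nat.cast_sub h.le]; ring
    push_cast
    linear_combination (∏ i ∈ Finset.Ico (j+1) m, ((n : ℂ) - (i : ℂ))) * hc
  · simp [bolA, Nat.choose_succ_self]
  · have h1 : m < j + 1 := by omega
    simp [bolA_zero n h, bolA_zero n h1, bolA_zero n (by omega : m + 1 < j + 1)]

lemma denom_ne_zero {a b c d : ℝ} (hdet : a * d - b * c = 1) {τ : ℂ} (hτ : 0 < τ.im) :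
    (c : ℂ) * τ + (d : ℂ) ≠ 0 := by
  intro h
  rcases eq_or_ne c 0 with rfl | hc
  · have hd : (d : ℂ) = 0 := by simpa using h
    have : d = 0 := by exact_mod_cast hd
    rw [this] at hdet; simp at hdet
  · have him := congrArg Complex.im h
    simp [Complex.add_im, Complex.mul_im] at him
    rcases him with h1 | h1
    · exact hc (by exact_mod_cast h1)
    · exact hτ.ne' h1

lemma moebius_mem {a b c d : ℝ} (hdet : a * d - b * c = 1) {τ : ℂ} (hτ : 0 < τ.im) :
    0 < (((a : ℂ) * τ + b) / ((c : ℂ) * τ + d)).im := by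
  have hden := denom_ne_zero hdet hτ
  rw [Complex.div_im]
  have hns : 0 < Complex.normSq ((c : ℂ) * τ + d) := Complex.normSq_pos.2 hden
  rw [div_sub_div_same]
  apply div_pos _ hns
  have : ((a : ℂ) * τ + ↑b).im * ((c : ℂ) * τ + ↑d).re -
      ((a : ℂ) * τ + ↑b).re * ((c : ℂ) * τ + ↑d).im = τ.im := by
    simp [Complex.add_im, Complex.add_re, Complex.mul_re, Complex.mul_im]
    nlinarith [hdet]
  rw [this]; exact hτ

lemma moebius_hasDerivAt {a b c d : ℝ} (hdet : a * d - b * c = 1) {τ : ℂ} (hτ : 0 < τ.im) :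
    HasDerivAt (fun z : ℂ => ((a : ℂ) * z + b) / ((c : ℂ) * z + d))
      (((c : ℂ) * τ + d) ^ (-2 : ℤ)) τ := by
  have hden := denom_ne_zero hdet hτ
  have h1 : HasDerivAt (fun z : ℂ => (a : ℂ) * z + b) a τ := by
    simpa using ((hasDerivAt_id τ).const_mul (a : ℂ)).add_const (b : ℂ)
  have h2 : HasDerivAt (fun z : ℂ => (c : ℂ) * z + d) c τ := by
    simpa using ((hasDerivAt_id τ).const_mul (c : ℂ)).add_const (d : ℂ)
  have := h1.div h2 hden
  apply this.congr_deriv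
  symm
  have hdetC : (a : ℂ) * d - b * c = 1 := by exact_mod_cast hdet
  have hnum : (a : ℂ) * ((c : ℂ) * τ + d) - ((a : ℂ) * τ + b) * c = 1 := by
    linear_combination hdetC
  rw [hnum, zpow_neg]
  norm_num

lemma analyticOnNhd_iteratedDeriv {f : ℂ → ℂ} {U : Set ℂ}
    (hf : AnalyticOnNhd ℂ f U) (j : ℕ) : AnalyticOnNhd ℂ (iteratedDeriv j f) U := by
  induction j with
  | zero => simpa using hf
  | succ j ih => rw [iteratedDeriv_succ]; exact ih.deriv
lemma bol_sum_identity (n : ℤ) (m : ℕ) (P : ℕ → ℂ) :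
    ∑ j ∈ Finset.range (m+2), bolA n (m+1) j * P j
      = ∑ j ∈ Finset.range (m+1),
          (((n:ℂ) - m - j) * bolA n m j * P j + bolA n m j * P (j+1)) := by
  rw [Finset.sum_range_succ' (fun j => bolA n (m+1) j * P j) (m+1)]
  simp only [bolA_recS, bolA_rec0, add_mul]
  rw [Finset.sum_add_distrib, Finset.sum_add_distrib]
  have h1 : (∑ j ∈ Finset.range (m+1), ((n:ℂ) - m - ((j:ℂ)+1)) * bolA n m (j+1) * P (j+1))
      + ((n:ℂ) - m) * bolA n m 0 * P 0
      = ∑ j ∈ Finset.range (m+1), ((n:ℂ) - m - j) * bolA n m j * P j := by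
    have h2 := Finset.sum_range_succ' (fun j : ℕ => ((n:ℂ) - m - j) * bolA n m j * P j) (m+1)
    rw [Finset.sum_range_succ] at h2
    have hz : ((n:ℂ) - m - (m+1)) * bolA n m (m+1) * P (m+1) = 0 := by
      rw [bolA_zero n (Nat.lt_succ_self m)]; ring
    simp only [Nat.cast_add, Nat.cast_one, Nat.cast_zero, sub_zero] at h2
    rw [hz] at h2
    linear_combination -h2
  linear_combination h1
lemma bol_key {a b c d : ℝ} (hdet : a * d - b * c = 1) {F : ℂ → ℂ}
    (hF : AnalyticOnNhd ℂ F {τ : ℂ | 0 < τ.im}) (n : ℤ) (m : ℕ) :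
    ∀ τ : ℂ, 0 < τ.im →
      iteratedDeriv m (fun z => ((c:ℂ)*z+d) ^ n * F (((a:ℂ)*z+b)/((c:ℂ)*z+d))) τ
        = ∑ j ∈ Finset.range (m+1), bolA n m j * (c:ℂ)^(m-j) *
            ((c:ℂ)*τ+d) ^ (n - m - j) * iteratedDeriv j F (((a:ℂ)*τ+b)/((c:ℂ)*τ+d)) := by
  have hUopen : IsOpen {τ : ℂ | 0 < τ.im} := isOpen_lt continuous_const Complex.continuous_im
  induction m with
  | zero =>
    intro τ hτ
    simp [bolA]
  | succ m ih =>
    intro τ hτ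
    have hJ : (c : ℂ) * τ + d ≠ 0 := denom_ne_zero hdet hτ
    have hu : 0 < (((a : ℂ) * τ + b) / ((c : ℂ) * τ + d)).im := moebius_mem hdet hτ
    rw [iteratedDeriv_succ]
    have hev : iteratedDeriv m (fun z => ((c:ℂ)*z+d) ^ n * F (((a:ℂ)*z+b)/((c:ℂ)*z+d)))
        =ᶠ[nhds τ] fun z => ∑ j ∈ Finset.range (m+1), bolA n m j * (c:ℂ)^(m-j) *
            ((c:ℂ)*z+d) ^ (n - m - j) * iteratedDeriv j F (((a:ℂ)*z+b)/((c:ℂ)*z+d)) :=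
      Filter.eventuallyEq_of_mem (hUopen.mem_nhds hτ) (fun z hz => ih z hz)
    rw [hev.deriv_eq]
    -- compute the derivative of the sum
    have hJlin : HasDerivAt (fun z : ℂ => (c:ℂ)*z+d) (c : ℂ) τ := by
      simpa using ((hasDerivAt_id τ).const_mul (c : ℂ)).add_const (d : ℂ)
    have hterm : ∀ j ∈ Finset.range (m+1),
        HasDerivAt (fun z => bolA n m j * (c:ℂ)^(m-j) *
            ((c:ℂ)*z+d) ^ (n - m - j) * iteratedDeriv j F (((a:ℂ)*z+b)/((c:ℂ)*z+d)))
          (bolA n m j * (c:ℂ)^(m-j) *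
            (((n - m - j : ℤ) * ((c:ℂ)*τ+d) ^ (n - m - j - 1) * c) *
                iteratedDeriv j F (((a:ℂ)*τ+b)/((c:ℂ)*τ+d))
              + ((c:ℂ)*τ+d) ^ (n - m - j) *
                (iteratedDeriv (j+1) F (((a:ℂ)*τ+b)/((c:ℂ)*τ+d)) * ((c:ℂ)*τ+d) ^ (-2:ℤ)))) τ := by
      intro j _
      have hpow : HasDerivAt (fun z : ℂ => ((c:ℂ)*z+d) ^ (n - m - j))
          (((n - m - j : ℤ) * ((c:ℂ)*τ+d) ^ (n - m - j - 1)) * c) τ := by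
        have := (hasDerivAt_zpow (n - m - j) ((c:ℂ)*τ+d) (Or.inl hJ)).comp τ hJlin
        simpa [Function.comp_def] using this
      have hFjd : HasDerivAt (iteratedDeriv j F)
          (iteratedDeriv (j+1) F (((a:ℂ)*τ+b)/((c:ℂ)*τ+d))) (((a:ℂ)*τ+b)/((c:ℂ)*τ+d)) := by
        rw [iteratedDeriv_succ]
        exact ((analyticOnNhd_iteratedDeriv hF j) _ hu).differentiableAt.hasDerivAt
      have hcomp : HasDerivAt (fun z => iteratedDeriv j F (((a:ℂ)*z+b)/((c:ℂ)*z+d)))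
          (iteratedDeriv (j+1) F (((a:ℂ)*τ+b)/((c:ℂ)*τ+d)) * ((c:ℂ)*τ+d) ^ (-2:ℤ)) τ := by
        have := hFjd.comp τ (moebius_hasDerivAt hdet hτ)
        simpa [Function.comp_def] using this
      have h0 := (hpow.fun_mul hcomp).const_mul (bolA n m j * (c:ℂ)^(m-j))
      have hfun : (fun z => bolA n m j * (c:ℂ)^(m-j) *
            (((c:ℂ)*z+d) ^ (n - m - j) * iteratedDeriv j F (((a:ℂ)*z+b)/((c:ℂ)*z+d))))
          = (fun z => bolA n m j * (c:ℂ)^(m-j) *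
            ((c:ℂ)*z+d) ^ (n - m - j) * iteratedDeriv j F (((a:ℂ)*z+b)/((c:ℂ)*z+d))) := by
        funext z; ring
      rw [hfun] at h0
      exact h0
    have hsum := HasDerivAt.fun_sum hterm
    rw [hsum.deriv]
    -- now the algebraic identity
    have hR : ∑ j ∈ Finset.range (m+1+1), bolA n (m+1) j * (c:ℂ)^(m+1-j) *
          ((c:ℂ)*τ+d) ^ (n - ((m+1:ℕ):ℤ) - j) * iteratedDeriv j F (((a:ℂ)*τ+b)/((c:ℂ)*τ+d))
        = ∑ j ∈ Finset.range (m+1), (((n:ℂ) - m - j) * bolA n m j *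
            ((c:ℂ)^(m+1-j) * ((c:ℂ)*τ+d) ^ (n - ((m+1:ℕ):ℤ) - j) *
              iteratedDeriv j F (((a:ℂ)*τ+b)/((c:ℂ)*τ+d)))
          + bolA n m j * ((c:ℂ)^(m+1-(j+1)) * ((c:ℂ)*τ+d) ^ (n - ((m+1:ℕ):ℤ) - ((j+1:ℕ):ℤ)) *
              iteratedDeriv (j+1) F (((a:ℂ)*τ+b)/((c:ℂ)*τ+d)))) := by
      rw [show m+1+1 = m+2 from rfl, ← bol_sum_identity n m (fun j => (c:ℂ)^(m+1-j) *
        ((c:ℂ)*τ+d) ^ (n - ((m+1:ℕ):ℤ) - j) * iteratedDeriv j F (((a:ℂ)*τ+b)/((c:ℂ)*τ+d)))]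
      exact Finset.sum_congr rfl fun j _ => by ring
    rw [hR]
    apply Finset.sum_congr rfl
    intro j hj
    have hjm : j ≤ m := by simpa [Nat.lt_succ_iff] using hj
    have hc1 : (c:ℂ)^(m+1-j) = (c:ℂ)^(m-j) * c := by
      rw [← pow_succ]
      congr 1
      omega
    have he1 : n - (m:ℤ) - (j:ℤ) - 1 = n - ((m+1:ℕ):ℤ) - (j:ℤ) := by push_cast; ring
    have hsplit : ((c:ℂ)*τ+d) ^ (n - ((m+1:ℕ):ℤ) - ((j+1:ℕ):ℤ))
        = ((c:ℂ)*τ+d) ^ (n - (m:ℤ) - (j:ℤ)) * ((c:ℂ)*τ+d) ^ (-2:ℤ) := by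
      rw [← zpow_add₀ hJ]
      congr 1
      push_cast; ring
    rw [hc1, he1, hsplit, Nat.succ_sub_succ]
    push_cast
    ring

/-- The weight-`w` slash action of the real matrix `(a b; c d)` on functions `ℂ → ℂ`:
`(F|_w g)(τ) = (cτ+d)^(−w) · F((aτ+b)/(cτ+d))`. -/
noncomputable def slash (w : ℤ) (a b c d : ℝ) (F : ℂ → ℂ) : ℂ → ℂ :=
  fun τ => ((c : ℂ) * τ + (d : ℂ)) ^ (-w) * F (((a : ℂ) * τ + (b : ℂ)) / ((c : ℂ) * τ + (d : ℂ)))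

/-- **Bol's identity.** For `k ≥ 2`, `f` holomorphic on the upper half-plane and
`g = (a b; c d) ∈ SL(2, ℝ)`, one has
`d^{k−1}/dτ^{k−1}(f|_{2−k} g) = (d^{k−1}f/dτ^{k−1})|_k g` on the upper half-plane. -/
theorem bol_identity (k : ℕ) (hk : 2 ≤ k)
    (f : ℂ → ℂ) (hf : DifferentiableOn ℂ f {τ : ℂ | 0 < τ.im})
    (a b c d : ℝ) (hdet : a * d - b * c = 1) :
    ∀ τ : ℂ, 0 < τ.im →
      iteratedDeriv (k - 1) (slash (2 - (k : ℤ)) a b c d f) τ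
        = slash (k : ℤ) a b c d (iteratedDeriv (k - 1) f) τ := by
  intro τ hτ
  have hUopen : IsOpen {τ : ℂ | 0 < τ.im} := isOpen_lt continuous_const Complex.continuous_im
  have hF : AnalyticOnNhd ℂ f {τ : ℂ | 0 < τ.im} := hf.analyticOnNhd hUopen
  have hfun : slash (2 - (k : ℤ)) a b c d f
      = fun z => ((c:ℂ)*z+d) ^ ((k:ℤ)-2) * f (((a:ℂ)*z+b)/((c:ℂ)*z+d)) := by
    funext z
    simp only [slash, neg_sub]
  rw [hfun, bol_key hdet hF ((k:ℤ)-2) (k-1) τ hτ]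
  rw [Finset.sum_eq_single (k-1)]
  · have hb : bolA ((k:ℤ)-2) (k-1) (k-1) = 1 := by
      simp [bolA]
    have he : (k:ℤ) - 2 - ((k-1:ℕ):ℤ) - ((k-1:ℕ):ℤ) = -(k:ℤ) := by
      push_cast [Nat.cast_sub (by omega : 1 ≤ k)]
      ring
    rw [hb, he]
    simp [slash]
  · intro j hj hjne
    have hjk : j ≤ k - 2 := by
      have := Finset.mem_range.mp hj
      omega
    have hb : bolA ((k:ℤ)-2) (k-1) j = 0 := by
      unfold bolA
      rw [Finset.prod_eq_zero (i := k-2) (by rw [Finset.mem_Ico]; omega)]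
      · ring
      · push_cast [Nat.cast_sub hk]
        ring
    rw [hb]
    ring
  · intro h
    exact absurd (Finset.mem_range.mpr (by omega)) h
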